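/- Let G be a graph on n vertices (n even) with δ(G) ≥ 3n/4, and let E(G) = E₁ ∪ E₂ be a 2-multicoloring of its edges. Suppose H₁ is a connected component of G₁ and H₂ is a connected component of G₂ with |V(H₁)| ≥ 3n/4, |V(H₂)| ≥ 3n/4, and V(G) = V(H₁) ∪ V(H₂). Then G contains a perfect matching M with M ⊆ E(H₁) ∪ E(H₂). -/

import Mathlib

open Finset

section PairsMatching

variable {V : Type} [Fintype V] [DecidableEq V]

/-- A finset of ordered pairs representing a matching in `H`. -/
def pairsGood (H : SimpleGraph V) (F : Finset (V × V)) : Prop :=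
  (∀ p ∈ F, H.Adj p.1 p.2) ∧
  ∀ p ∈ F, ∀ q ∈ F, p ≠ q → p.1 ≠ q.1 ∧ p.1 ≠ q.2 ∧ p.2 ≠ q.1 ∧ p.2 ≠ q.2

/-- The covered vertices. -/
def covP (F : Finset (V × V)) : Finset V := F.image Prod.fst ∪ F.image Prod.snd

lemma mem_covP {F : Finset (V × V)} {a : V} :
    a ∈ covP F ↔ ∃ p ∈ F, a = p.1 ∨ a = p.2 := by
  simp only [covP, mem_union, mem_image]
  constructor
  · rintro (⟨p, hp, rfl⟩ | ⟨p, hp, rfl⟩) <;> exact ⟨p, hp, by simp⟩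
  · rintro ⟨p, hp, rfl | rfl⟩
    · exact Or.inl ⟨p, hp, rfl⟩
    · exact Or.inr ⟨p, hp, rfl⟩

lemma covP_coords {F : Finset (V × V)} {p : V × V} (hp : p ∈ F) :
    p.1 ∈ covP F ∧ p.2 ∈ covP F :=
  ⟨mem_covP.2 ⟨p, hp, Or.inl rfl⟩, mem_covP.2 ⟨p, hp, Or.inr rfl⟩⟩

lemma card_covP {H : SimpleGraph V} {F : Finset (V × V)} (hF : pairsGood H F) :
    (covP F).card = 2 * F.card := by
  have hdisj : Disjoint (F.image Prod.fst) (F.image Prod.snd) := by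
    rw [Finset.disjoint_left]
    rintro a ha hb
    obtain ⟨p, hp, rfl⟩ := mem_image.1 ha
    obtain ⟨q, hq, hq2⟩ := mem_image.1 hb
    by_cases hpq : p = q
    · subst hpq; exact (hF.1 p hp).ne (hq2.symm)
    · exact (hF.2 p hp q hq hpq).2.1 hq2.symm
  have h1 : (F.image Prod.fst).card = F.card := by
    apply Finset.card_image_of_injOn
    intro p hp q hq h
    by_contra hpq
    exact (hF.2 p hp q hq hpq).1 h
  have h2 : (F.image Prod.snd).card = F.card := by
    apply Finset.card_image_of_injOn
    intro p hp q hq h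
    by_contra hpq
    exact (hF.2 p hp q hq hpq).2.2.2 h
  rw [covP, Finset.card_union_of_disjoint hdisj, h1, h2]; ring

lemma card_inter_pair (s : Finset V) {a b : V} (hab : a ≠ b) :
    (s ∩ {a, b}).card = (if a ∈ s then 1 else 0) + (if b ∈ s then 1 else 0) := by
  rw [Finset.inter_comm, ← Finset.filter_mem_eq_inter, Finset.card_filter,
    Finset.sum_pair hab]

lemma sum_inter_pairs {H : SimpleGraph V} {F : Finset (V × V)} (hF : pairsGood H F)
    (s : Finset V) (hs : s ⊆ covP F) :
    s.card = ∑ p ∈ F, (s ∩ {p.1, p.2}).card := by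
  have hbi : covP F = F.biUnion (fun p => {p.1, p.2}) := by
    ext a
    simp only [mem_covP, Finset.mem_biUnion, Finset.mem_insert, Finset.mem_singleton]
  have hinter : s = F.biUnion (fun p => s ∩ {p.1, p.2}) := by
    ext a
    simp only [Finset.mem_biUnion, Finset.mem_inter]
    constructor
    · intro ha
      have := hs ha
      rw [hbi] at this
      obtain ⟨p, hp, hmem⟩ := Finset.mem_biUnion.1 this
      exact ⟨p, hp, ha, hmem⟩
    · rintro ⟨p, _, ha, _⟩; exact ha
  conv_lhs => rw [hinter]
  apply Finset.card_biUnion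
  intro p hp q hq hpq
  obtain ⟨h1, h2, h3, h4⟩ := hF.2 p hp q hq hpq
  rw [Function.onFun, Finset.disjoint_left]
  intro a ha hb
  simp only [Finset.mem_inter, Finset.mem_insert, Finset.mem_singleton] at ha hb
  rcases ha.2 with h' | h' <;> rcases hb.2 with h'' | h''
  · exact h1 (h'.symm.trans h'')
  · exact h2 (h'.symm.trans h'')
  · exact h3 (h'.symm.trans h'')
  · exact h4 (h'.symm.trans h'')

/-- The exchange step. -/
lemma exchange {H : SimpleGraph V} {F : Finset (V × V)} (hF : pairsGood H F)
    {x y u v : V} (hp : (x, y) ∈ F) (hu : u ∉ covP F) (hv : v ∉ covP F)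
    (huv : u ≠ v) (hux : H.Adj u x) (hvy : H.Adj v y) :
    ∃ F' : Finset (V × V), pairsGood H F' ∧ F'.card = F.card + 1 := by
  have hxy : H.Adj x y := hF.1 _ hp
  have hxcov : x ∈ covP F := (covP_coords hp).1
  have hycov : y ∈ covP F := (covP_coords hp).2
  have hqcoords : ∀ q ∈ F.erase (x, y),
      q.1 ≠ u ∧ q.2 ≠ u ∧ q.1 ≠ v ∧ q.2 ≠ v ∧ q.1 ≠ x ∧ q.2 ≠ x ∧ q.1 ≠ y ∧ q.2 ≠ y := by
    intro q hq
    have hqF : q ∈ F := Finset.mem_of_mem_erase hq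
    have hqne : q ≠ (x, y) := Finset.ne_of_mem_erase hq
    obtain ⟨a1, a2, a3, a4⟩ := hF.2 q hqF (x, y) hp hqne
    have c1 : q.1 ∈ covP F := (covP_coords hqF).1
    have c2 : q.2 ∈ covP F := (covP_coords hqF).2
    exact ⟨fun h => hu (h ▸ c1), fun h => hu (h ▸ c2), fun h => hv (h ▸ c1),
      fun h => hv (h ▸ c2), a1, a3, a2, a4⟩
  refine ⟨insert (u, x) (insert (v, y) (F.erase (x, y))), ⟨?_, ?_⟩, ?_⟩
  · intro p hpm
    rcases Finset.mem_insert.1 hpm with rfl | hpm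
    · exact hux
    rcases Finset.mem_insert.1 hpm with rfl | hpm
    · exact hvy
    · exact hF.1 _ (Finset.mem_of_mem_erase hpm)
  · intro p hpm q hqm hpq
    have hne : ∀ w z : V × V, w = (u, x) ∨ w = (v, y) ∨ w ∈ F.erase (x, y) →
        z = (u, x) ∨ z = (v, y) ∨ z ∈ F.erase (x, y) → w ≠ z →
        w.1 ≠ z.1 ∧ w.1 ≠ z.2 ∧ w.2 ≠ z.1 ∧ w.2 ≠ z.2 := by
      rintro w z (rfl | rfl | hw) (rfl | rfl | hz) hwz
      · exact absurd rfl hwz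
      · exact ⟨huv, fun h => hu ((show u = y from h).symm ▸ hycov),
          fun h => hv ((show x = v from h) ▸ hxcov), hxy.ne⟩
      · obtain ⟨b1, b2, b3, b4, b5, b6, b7, b8⟩ := hqcoords z hz
        exact ⟨fun h => b1 h.symm, fun h => b2 h.symm, fun h => b5 h.symm, fun h => b6 h.symm⟩
      · exact ⟨huv.symm, fun h => hv ((show v = x from h).symm ▸ hxcov),
          fun h => hu ((show y = u from h) ▸ hycov), hxy.ne'⟩
      · exact absurd rfl hwz
      · obtain ⟨b1, b2, b3, b4, b5, b6, b7, b8⟩ := hqcoords z hz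
        exact ⟨fun h => b3 h.symm, fun h => b4 h.symm, fun h => b7 h.symm, fun h => b8 h.symm⟩
      · obtain ⟨b1, b2, b3, b4, b5, b6, b7, b8⟩ := hqcoords w hw
        exact ⟨b1, b5, b2, b6⟩
      · obtain ⟨b1, b2, b3, b4, b5, b6, b7, b8⟩ := hqcoords w hw
        exact ⟨b3, b7, b4, b8⟩
      · exact hF.2 w (Finset.mem_of_mem_erase hw) z (Finset.mem_of_mem_erase hz) hwz
    have hp' := Finset.mem_insert.1 hpm
    have hq' := Finset.mem_insert.1 hqm
    refine hne p q ?_ ?_ hpq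
    · rcases hp' with rfl | hp' 
      · exact Or.inl rfl
      · rcases Finset.mem_insert.1 hp' with rfl | hp'' 
        · exact Or.inr (Or.inl rfl)
        · exact Or.inr (Or.inr hp'')
    · rcases hq' with rfl | hq' 
      · exact Or.inl rfl
      · rcases Finset.mem_insert.1 hq' with rfl | hq'' 
        · exact Or.inr (Or.inl rfl)
        · exact Or.inr (Or.inr hq'')
  · -- cardinality
    have hvy' : (v, y) ∉ F.erase (x, y) := by
      intro h
      exact (hqcoords _ h).2.2.1 rfl
    have hux' : (u, x) ∉ insert (v, y) (F.erase (x, y)) := by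
      intro h
      rcases Finset.mem_insert.1 h with h | h
      · exact huv (congrArg Prod.fst h)
      · exact (hqcoords _ h).1 rfl
    have hcard : F.card ≥ 1 := Finset.card_pos.2 ⟨_, hp⟩
    rw [Finset.card_insert_of_notMem hux', Finset.card_insert_of_notMem hvy',
      Finset.card_erase_of_mem hp]
    omega

lemma step_lemma {H : SimpleGraph V} [DecidableRel H.Adj] {F : Finset (V × V)} {n : ℕ}
    (hn : Fintype.card V = n) (hdeg : ∀ v, n ≤ 2 * (H.neighborFinset v).card)
    (hF : pairsGood H F) (hle : 2 * F.card + 2 ≤ n) :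
    ∃ F' : Finset (V × V), pairsGood H F' ∧ F'.card = F.card + 1 := by
  set U : Finset V := Finset.univ \ covP F with hU
  have hcovcard : (covP F).card = 2 * F.card := card_covP hF
  have hUcard : 2 ≤ U.card := by
    rw [hU, Finset.card_sdiff_of_subset (Finset.subset_univ _), Finset.card_univ, hn]
    omega
  obtain ⟨u, hu, v, hv, huv⟩ := Finset.one_lt_card.1 (by omega : 1 < U.card)
  have huU : u ∉ covP F := by simpa [hU] using hu
  have hvU : v ∉ covP F := by simpa [hU] using hv
  by_cases hA : ∃ p : V × V, H.Adj p.1 p.2 ∧ p.1 ∉ covP F ∧ p.2 ∉ covP F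
  · obtain ⟨⟨a, b⟩, hab, haU, hbU⟩ := hA
    refine ⟨insert (a, b) F, ⟨?_, ?_⟩, ?_⟩
    · intro p hp
      rcases Finset.mem_insert.1 hp with rfl | hp
      · exact hab
      · exact hF.1 p hp
    · intro p hp q hq hpq
      rcases Finset.mem_insert.1 hp with rfl | hp <;> rcases Finset.mem_insert.1 hq with rfl | hq
      · exact absurd rfl hpq
      · obtain ⟨c1, c2⟩ := covP_coords hq
        exact ⟨fun h => haU (h ▸ c1), fun h => haU (h ▸ c2),
          fun h => hbU (h ▸ c1), fun h => hbU (h ▸ c2)⟩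
      · obtain ⟨c1, c2⟩ := covP_coords hp
        exact ⟨fun h => haU (h.symm ▸ c1), fun h => hbU (h.symm ▸ c1),
          fun h => haU (h.symm ▸ c2), fun h => hbU (h.symm ▸ c2)⟩
      · exact hF.2 p hp q hq hpq
    · rw [Finset.card_insert_of_notMem (fun h => haU (covP_coords h).1)]
  · push_neg at hA
    have hNu : H.neighborFinset u ⊆ covP F := by
      intro w hw
      by_contra hwc
      exact hwc (hA (u, w) ((SimpleGraph.mem_neighborFinset _ _ _).1 hw) huU)
    have hNv : H.neighborFinset v ⊆ covP F := by
      intro w hw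
      by_contra hwc
      exact hwc (hA (v, w) ((SimpleGraph.mem_neighborFinset _ _ _).1 hw) hvU)
    have hsum : (H.neighborFinset u).card + (H.neighborFinset v).card
        = ∑ p ∈ F, ((H.neighborFinset u ∩ {p.1, p.2}).card
            + (H.neighborFinset v ∩ {p.1, p.2}).card) := by
      rw [Finset.sum_add_distrib, ← sum_inter_pairs hF _ hNu, ← sum_inter_pairs hF _ hNv]
    have hbig : ∃ p ∈ F, 3 ≤ (H.neighborFinset u ∩ {p.1, p.2}).card
        + (H.neighborFinset v ∩ {p.1, p.2}).card := by
      by_contra hno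
      push_neg at hno
      have hb : ∑ p ∈ F, ((H.neighborFinset u ∩ {p.1, p.2}).card
          + (H.neighborFinset v ∩ {p.1, p.2}).card) ≤ F.card * 2 :=
        Finset.sum_le_card_nsmul F _ 2 (fun p hp => by have := hno p hp; omega)
      have h1 := hdeg u
      have h2 := hdeg v
      omega
    obtain ⟨⟨x, y⟩, hpF, h3⟩ := hbig
    have hxy : x ≠ y := (hF.1 _ hpF).ne
    rw [card_inter_pair _ hxy, card_inter_pair _ hxy] at h3
    simp only [SimpleGraph.mem_neighborFinset] at h3
    have htrans : (H.Adj u x ∧ H.Adj v y) ∨ (H.Adj u y ∧ H.Adj v x) := by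
      by_cases hux : H.Adj u x <;> by_cases huy : H.Adj u y <;>
        by_cases hvx : H.Adj v x <;> by_cases hvy : H.Adj v y <;>
        simp_all
    rcases htrans with ⟨hux, hvy⟩ | ⟨huy, hvx⟩
    · exact exchange hF hpF huU hvU huv hux hvy
    · exact exchange hF hpF hvU huU huv.symm hvx huy

lemma exists_perfect_pairs {H : SimpleGraph V} [DecidableRel H.Adj] {n : ℕ}
    (hn : Fintype.card V = n) (hev : Even n)
    (hdeg : ∀ v, n ≤ 2 * (H.neighborFinset v).card) :
    ∃ F : Finset (V × V), pairsGood H F ∧ ∀ a : V, a ∈ covP F := by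
  obtain ⟨m, hm⟩ := hev
  have key : ∀ k : ℕ, k ≤ m → ∃ F : Finset (V × V), pairsGood H F ∧ F.card = k := by
    intro k
    induction k with
    | zero => exact fun _ => ⟨∅, ⟨by simp, by simp⟩, by simp⟩
    | succ k ih =>
      intro hk
      obtain ⟨F, hF, hcard⟩ := ih (by omega)
      obtain ⟨F', hF', hcard'⟩ := step_lemma hn hdeg hF (by omega)
      exact ⟨F', hF', by omega⟩
  obtain ⟨F, hF, hcard⟩ := key m le_rfl
  refine ⟨F, hF, ?_⟩
  have : (covP F).card = Fintype.card V := by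
    rw [card_covP hF, hcard, hn]; omega
  intro a
  exact (Finset.eq_univ_of_card _ this) ▸ Finset.mem_univ a

end PairsMatching

theorem lemma_pureconnectedmatching {V : Type} [Fintype V]
    (G G₁ G₂ : SimpleGraph V) (n : ℕ) (hn : Fintype.card V = n) (hev : Even n)
    (hδ : ∀ v : V, (3 : ℝ) / 4 * n ≤ ((G.neighborSet v).ncard : ℝ))
    (hcol : G₁ ⊔ G₂ = G)
    (C₁ : G₁.ConnectedComponent) (C₂ : G₂.ConnectedComponent)
    (h1 : (3 : ℝ) / 4 * n ≤ (C₁.supp.ncard : ℝ))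
    (h2 : (3 : ℝ) / 4 * n ≤ (C₂.supp.ncard : ℝ))
    (hcov : C₁.supp ∪ C₂.supp = Set.univ) :
    ∃ M : G.Subgraph, M.IsPerfectMatching ∧
      ∀ u v : V, M.Adj u v →
        (G₁.Adj u v ∧ u ∈ C₁.supp ∧ v ∈ C₁.supp) ∨
        (G₂.Adj u v ∧ u ∈ C₂.supp ∧ v ∈ C₂.supp) := by
  classical
  -- the "usable edges" graph
  let H : SimpleGraph V :=
    { Adj := fun a b => (G₁.Adj a b ∧ a ∈ C₁.supp ∧ b ∈ C₁.supp) ∨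
        (G₂.Adj a b ∧ a ∈ C₂.supp ∧ b ∈ C₂.supp)
      symm := by
        constructor
        rintro a b (⟨h, ha, hb⟩ | ⟨h, ha, hb⟩)
        · exact Or.inl ⟨h.symm, hb, ha⟩
        · exact Or.inr ⟨h.symm, hb, ha⟩
      loopless := by
        constructor
        rintro a (⟨h, -, -⟩ | ⟨h, -, -⟩) <;> exact h.ne rfl }
  haveI : DecidableRel H.Adj := Classical.decRel _
  have hHadj : ∀ a b : V, H.Adj a b ↔ ((G₁.Adj a b ∧ a ∈ C₁.supp ∧ b ∈ C₁.supp) ∨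
      (G₂.Adj a b ∧ a ∈ C₂.supp ∧ b ∈ C₂.supp)) := fun a b => Iff.rfl
  have hG1 : ∀ a b : V, G₁.Adj a b → G.Adj a b := by
    intro a b h; rw [← hcol]; exact Or.inl h
  have hG2 : ∀ a b : V, G₂.Adj a b → G.Adj a b := by
    intro a b h; rw [← hcol]; exact Or.inr h
  have hGsplit : ∀ a b : V, G.Adj a b → G₁.Adj a b ∨ G₂.Adj a b := by
    intro a b h; rw [← hcol] at h; exact h
  have in1 : ∀ v u : V, v ∈ C₁.supp → G₁.Adj v u → H.Adj v u := by
    intro v u hv h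
    have hu : u ∈ C₁.supp := by
      rw [SimpleGraph.ConnectedComponent.mem_supp_iff] at hv ⊢
      rw [← hv]
      exact (SimpleGraph.ConnectedComponent.connectedComponentMk_eq_of_adj h.symm)
    exact Or.inl ⟨h, hv, hu⟩
  have in2 : ∀ v u : V, v ∈ C₂.supp → G₂.Adj v u → H.Adj v u := by
    intro v u hv h
    have hu : u ∈ C₂.supp := by
      rw [SimpleGraph.ConnectedComponent.mem_supp_iff] at hv ⊢
      rw [← hv]
      exact (SimpleGraph.ConnectedComponent.connectedComponentMk_eq_of_adj h.symm)
    exact Or.inr ⟨h, hv, hu⟩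
  -- the degree bound on `H`
  have hnR : (0 : ℝ) ≤ (n : ℝ) := Nat.cast_nonneg n
  have hdegH : ∀ v : V, n ≤ 2 * (H.neighborFinset v).card := by
    intro v
    have hcast : (H.neighborFinset v).card = (H.neighborSet v).ncard := by
      rw [SimpleGraph.neighborFinset_def, ← Set.ncard_eq_toFinset_card']
    rw [hcast]
    have hvmem : v ∈ C₁.supp ∨ v ∈ C₂.supp := by
      have : v ∈ C₁.supp ∪ C₂.supp := by rw [hcov]; exact Set.mem_univ v
      exact this
    suffices h : (n : ℝ) ≤ 2 * ((H.neighborSet v).ncard : ℝ) by exact_mod_cast h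
    by_cases hv1 : v ∈ C₁.supp <;> by_cases hv2 : v ∈ C₂.supp
    · -- v in both components: all edges usable
      have hsub : G.neighborSet v ⊆ H.neighborSet v := by
        intro u hu
        rcases hGsplit v u hu with h | h
        · exact in1 v u hv1 h
        · exact in2 v u hv2 h
      have := Set.ncard_le_ncard hsub (Set.toFinite _)
      have hδv := hδ v
      have : ((G.neighborSet v).ncard : ℝ) ≤ ((H.neighborSet v).ncard : ℝ) := by
        exact_mod_cast this
      linarith
    · -- v only in C₁
      set D := G₂.connectedComponentMk v with hD
      have hvD : v ∈ D.supp := by rw [SimpleGraph.ConnectedComponent.mem_supp_iff]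
      have hsub : G.neighborSet v ⊆ H.neighborSet v ∪ (D.supp \ {v}) := by
        intro u hu
        rcases hGsplit v u hu with h | h
        · exact Or.inl (in1 v u hv1 h)
        · refine Or.inr ⟨?_, ?_⟩
          · rw [SimpleGraph.ConnectedComponent.mem_supp_iff, hD]
            exact (SimpleGraph.ConnectedComponent.connectedComponentMk_eq_of_adj h.symm)
          · exact fun heq => h.ne' heq
      have hb1 : (G.neighborSet v).ncard ≤ (H.neighborSet v).ncard + (D.supp \ {v}).ncard :=
        le_trans (Set.ncard_le_ncard hsub (Set.toFinite _)) (Set.ncard_union_le _ _)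
      have hb2 : (D.supp \ {v}).ncard + 1 = D.supp.ncard :=
        Set.ncard_diff_singleton_add_one hvD
      have hdisj : Disjoint D.supp C₂.supp := by
        rw [Set.disjoint_left]
        intro u huD huC
        rw [SimpleGraph.ConnectedComponent.mem_supp_iff] at huD huC
        exact hv2 (by rw [SimpleGraph.ConnectedComponent.mem_supp_iff, ← hD, ← huD]; exact huC)
      have hb3 : D.supp.ncard + C₂.supp.ncard ≤ n := by
        rw [← Set.ncard_union_eq hdisj (Set.toFinite _) (Set.toFinite _)]
        calc (D.supp ∪ C₂.supp).ncard ≤ (Set.univ : Set V).ncard :=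
              Set.ncard_le_ncard (Set.subset_univ _) (Set.toFinite _)
          _ = n := by rw [Set.ncard_univ, Nat.card_eq_fintype_card, hn]
      have hδv := hδ v
      have hb1' : ((G.neighborSet v).ncard : ℝ) ≤
          ((H.neighborSet v).ncard : ℝ) + ((D.supp \ {v}).ncard : ℝ) := by exact_mod_cast hb1
      have hb2' : ((D.supp \ {v}).ncard : ℝ) + 1 = (D.supp.ncard : ℝ) := by exact_mod_cast hb2
      have hb3' : (D.supp.ncard : ℝ) + (C₂.supp.ncard : ℝ) ≤ (n : ℝ) := by exact_mod_cast hb3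
      linarith
    · -- v only in C₂
      set D := G₁.connectedComponentMk v with hD
      have hvD : v ∈ D.supp := by rw [SimpleGraph.ConnectedComponent.mem_supp_iff]
      have hsub : G.neighborSet v ⊆ H.neighborSet v ∪ (D.supp \ {v}) := by
        intro u hu
        rcases hGsplit v u hu with h | h
        · refine Or.inr ⟨?_, ?_⟩
          · rw [SimpleGraph.ConnectedComponent.mem_supp_iff, hD]
            exact (SimpleGraph.ConnectedComponent.connectedComponentMk_eq_of_adj h.symm)
          · exact fun heq => h.ne' heq
        · exact Or.inl (in2 v u hv2 h)
      have hb1 : (G.neighborSet v).ncard ≤ (H.neighborSet v).ncard + (D.supp \ {v}).ncard :=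
        le_trans (Set.ncard_le_ncard hsub (Set.toFinite _)) (Set.ncard_union_le _ _)
      have hb2 : (D.supp \ {v}).ncard + 1 = D.supp.ncard :=
        Set.ncard_diff_singleton_add_one hvD
      have hdisj : Disjoint D.supp C₁.supp := by
        rw [Set.disjoint_left]
        intro u huD huC
        rw [SimpleGraph.ConnectedComponent.mem_supp_iff] at huD huC
        exact hv1 (by rw [SimpleGraph.ConnectedComponent.mem_supp_iff, ← hD, ← huD]; exact huC)
      have hb3 : D.supp.ncard + C₁.supp.ncard ≤ n := by
        rw [← Set.ncard_union_eq hdisj (Set.toFinite _) (Set.toFinite _)]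
        calc (D.supp ∪ C₁.supp).ncard ≤ (Set.univ : Set V).ncard :=
              Set.ncard_le_ncard (Set.subset_univ _) (Set.toFinite _)
          _ = n := by rw [Set.ncard_univ, Nat.card_eq_fintype_card, hn]
      have hδv := hδ v
      have hb1' : ((G.neighborSet v).ncard : ℝ) ≤
          ((H.neighborSet v).ncard : ℝ) + ((D.supp \ {v}).ncard : ℝ) := by exact_mod_cast hb1
      have hb2' : ((D.supp \ {v}).ncard : ℝ) + 1 = (D.supp.ncard : ℝ) := by exact_mod_cast hb2
      have hb3' : (D.supp.ncard : ℝ) + (C₁.supp.ncard : ℝ) ≤ (n : ℝ) := by exact_mod_cast hb3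
      linarith
    · exact absurd hvmem (by tauto)
  -- get the perfect matching as a finset of pairs
  obtain ⟨F, hF, hFcov⟩ := exists_perfect_pairs hn hev hdegH
  have hHG : ∀ a b : V, H.Adj a b → G.Adj a b := by
    intro a b h
    rcases h with ⟨h, -, -⟩ | ⟨h, -, -⟩
    · exact hG1 a b h
    · exact hG2 a b h
  have huniq : ∀ a w y : V, ((a, w) ∈ F ∨ (w, a) ∈ F) → ((a, y) ∈ F ∨ (y, a) ∈ F) → w = y := by
    rintro a w y (hw | hw) (hy | hy)
    · by_cases h : (a, w) = (a, y)
      · exact congrArg Prod.snd h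
      · exact absurd rfl (hF.2 _ hw _ hy h).1
    · by_cases h : ((a, w) : V × V) = (y, a)
      · exact absurd (congrArg Prod.snd h) (hF.1 _ hw).ne'
      · exact absurd rfl (hF.2 _ hw _ hy h).2.1
    · by_cases h : ((w, a) : V × V) = (a, y)
      · exact absurd (congrArg Prod.fst h) (hF.1 _ hw).ne
      · exact absurd rfl (hF.2 _ hw _ hy h).2.2.1
    · by_cases h : ((w, a) : V × V) = (y, a)
      · exact congrArg Prod.fst h
      · exact absurd rfl (hF.2 _ hw _ hy h).2.2.2
  refine ⟨{ verts := Set.univ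
            Adj := fun a b => (a, b) ∈ F ∨ (b, a) ∈ F
            adj_sub := ?_
            edge_vert := fun _ => Set.mem_univ _
            symm := ⟨fun a b h => Or.symm h⟩ }, ⟨?_, fun _ => Set.mem_univ _⟩, ?_⟩
  · rintro a b (h | h)
    · exact hHG a b (hF.1 _ h)
    · exact (hHG b a (hF.1 _ h)).symm
  · intro a _
    obtain ⟨p, hp, hap⟩ := mem_covP.1 (hFcov a)
    obtain ⟨a', w⟩ := p
    rcases hap with h | h
    · subst h
      exact ⟨w, Or.inl hp, fun y hy => (huniq a w y (Or.inl hp) hy).symm⟩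
    · subst h
      exact ⟨a', Or.inr hp, fun y hy => (huniq a a' y (Or.inr hp) hy).symm⟩
  · intro u v h
    rcases h with h | h
    · exact hF.1 _ h
    · rcases hF.1 _ h with ⟨ha, hb, hc⟩ | ⟨ha, hb, hc⟩
      · exact Or.inl ⟨ha.symm, hc, hb⟩
      · exact Or.inr ⟨ha.symm, hc, hb⟩
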